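/- Let m, n, l be integers with l ≥ 0, m ≥ l + 2, and n − 2 > 2^l. Then Σ¹_odd(m, n, l) > Σ²_odd(m, n, l). In particular, the extra condition of Theorem 2.8(iv′) in the odd case holds whenever n − 2 > 2^{m−3} (taking all 2 ≤ l ≤ m − 3). -/

import Mathlib

def Sigma1Even (m n l : ℕ) : ℕ :=
  ∑ r ∈ Finset.range (l / 2 + 1),
    (Nat.choose l (2 * r) * 2 ^ (2 * r + 1) * (n - 2) ^ (m - (2 * r + 1)) +
      Nat.choose l (2 * r + 1) * 2 ^ (m - l + (2 * r + 1)) * (n - 2) ^ (l - (2 * r + 1)))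

def Sigma2Even (m n l : ℕ) : ℕ :=
  ∑ r ∈ Finset.range (l / 2 + 1),
    (Nat.choose l (2 * r) * 2 ^ (2 * r + 2) * (n - 2) ^ (m - (2 * r + 2)) +
      Nat.choose l (2 * r + 1) * 2 ^ (2 * r + 1) * (n - 2) ^ (m - (2 * r + 2)))

def Sigma1Odd (m n l : ℕ) : ℕ :=
  ∑ r ∈ Finset.range (l / 2 + 1),
    (Nat.choose l (2 * r) * (n - 2) ^ (m - (2 * r + 1)) +
      Nat.choose l (2 * r + 1) * (n - 2) ^ (l - (2 * r + 1)))

def Sigma2Odd (m n l : ℕ) : ℕ :=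
  ∑ r ∈ Finset.range (l / 2 + 1),
    (Nat.choose l (2 * r) * (n - 2) ^ (m - (2 * r + 2)) +
      Nat.choose l (2 * r + 1) * (n - 2) ^ (m - (2 * r + 2)))


lemma pair_sum (f : ℕ → ℕ) (k : ℕ) :
    ∑ r ∈ Finset.range k, (f (2 * r) + f (2 * r + 1)) = ∑ i ∈ Finset.range (2 * k), f i := by
  induction k with
  | zero => simp
  | succ k ih =>
    rw [Finset.sum_range_succ, ih, Nat.mul_succ, Finset.sum_range_succ, Finset.sum_range_succ]
    ring

lemma choose_pair_sum (l : ℕ) :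
    ∑ r ∈ Finset.range (l / 2 + 1), (Nat.choose l (2 * r) + Nat.choose l (2 * r + 1)) = 2 ^ l := by
  rw [pair_sum]
  have h1 : l + 1 ≤ 2 * (l / 2 + 1) := by omega
  rw [← Finset.sum_range_add_sum_Ico _ h1, Nat.sum_range_choose]
  have : ∀ i ∈ Finset.Ico (l + 1) (2 * (l / 2 + 1)), Nat.choose l i = 0 := by
    intro i hi
    exact Nat.choose_eq_zero_of_lt (by simp at hi; omega)
  rw [Finset.sum_congr rfl this]
  simp

theorem stmt_15 (m n l : ℕ) (hm : l + 2 ≤ m) (hn : 2 ^ l < n - 2) :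
    Sigma1Odd m n l > Sigma2Odd m n l := by
  have hpos : 1 ≤ n - 2 := le_trans (Nat.one_le_two_pow) hn.le
  have h2 : Sigma2Odd m n l ≤ 2 ^ l * (n - 2) ^ (m - 2) := by
    calc Sigma2Odd m n l
        ≤ ∑ r ∈ Finset.range (l / 2 + 1),
            (Nat.choose l (2 * r) + Nat.choose l (2 * r + 1)) * (n - 2) ^ (m - 2) := by
          apply Finset.sum_le_sum
          intro r _
          rw [add_mul]
          exact add_le_add (Nat.mul_le_mul_left _ (Nat.pow_le_pow_right hpos (by omega)))
            (Nat.mul_le_mul_left _ (Nat.pow_le_pow_right hpos (by omega)))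
      _ = 2 ^ l * (n - 2) ^ (m - 2) := by rw [← Finset.sum_mul, choose_pair_sum]
  have h1 : (n - 2) ^ (m - 1) ≤ Sigma1Odd m n l := by
    have : Nat.choose l (2 * 0) * (n - 2) ^ (m - (2 * 0 + 1)) +
        Nat.choose l (2 * 0 + 1) * (n - 2) ^ (l - (2 * 0 + 1)) ≤ Sigma1Odd m n l := by
      apply Finset.single_le_sum (f := fun r => Nat.choose l (2 * r) * (n - 2) ^ (m - (2 * r + 1)) +
        Nat.choose l (2 * r + 1) * (n - 2) ^ (l - (2 * r + 1))) (fun _ _ => Nat.zero_le _)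
      simp [Sigma1Odd]
    simp at this
    omega
  have key : 2 ^ l * (n - 2) ^ (m - 2) < (n - 2) ^ (m - 1) := by
    have : (n - 2) ^ (m - 1) = (n - 2) * (n - 2) ^ (m - 2) := by
      rw [← pow_succ']
      congr 1
      omega
    rw [this]
    have hp : 0 < (n - 2) ^ (m - 2) := pow_pos (by omega) _
    exact Nat.mul_lt_mul_of_lt_of_le hn (le_refl _) hp
  omega
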